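/- Let f ∈ R be nonzero with ev_z(f) ≠ 0 for every z ∈ (S¹)^d. Then the limit as n → ∞ of n^{-d} · Σ_ω log|ev_ω(f)|, the sum taken over all d-tuples ω ∈ (μ_n)^d of n-th roots of unity, exists and equals the logarithmic Mahler measure m(f) = ∫₀¹…∫₀¹ log|f(e^{2πis₁},…,e^{2πis_d})| ds₁…ds_d. -/

import Mathlib

noncomputable section

open MeasureTheory Filter Topology

lemma pi_Icc_ae_Ico (d : ℕ) :
    (Set.univ.pi fun _ : Fin d => Set.Icc (0:ℝ) 1) =ᵐ[volume]
    (Set.univ.pi fun _ : Fin d => Set.Ico (0:ℝ) 1) := by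
  have hsub : (Set.univ.pi fun _ : Fin d => Set.Ico (0:ℝ) 1) ⊆
      Set.univ.pi fun _ : Fin d => Set.Icc (0:ℝ) 1 :=
    Set.pi_mono fun i _ => Set.Ico_subset_Icc_self
  have h1 : volume (Set.univ.pi fun _ : Fin d => Set.Icc (0:ℝ) 1) = 1 := by
    rw [volume_pi_pi]; simp [Real.volume_Icc]
  have h2 : volume (Set.univ.pi fun _ : Fin d => Set.Ico (0:ℝ) 1) = 1 := by
    rw [volume_pi_pi]; simp [Real.volume_Ico]
  refine (MeasureTheory.ae_eq_of_subset_of_measure_ge hsub ?_ ?_ ?_).symm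
  · rw [h1, h2]
  · exact (MeasurableSet.univ_pi fun i => measurableSet_Ico).nullMeasurableSet
  · rw [h1]; exact ENNReal.one_ne_top

lemma union_boxes (d N : ℕ) (hN : 1 ≤ N) :
    (⋃ j : Fin d → Fin N, Set.univ.pi fun i =>
      Set.Ico ((j i : ℝ)/N) (((j i : ℝ)+1)/N)) =
      Set.univ.pi fun _ : Fin d => Set.Ico (0:ℝ) 1 := by
  have hN0 : (0:ℝ) < N := by exact_mod_cast hN
  ext x
  simp only [Set.mem_iUnion, Set.mem_pi, Set.mem_univ, forall_true_left, Set.mem_Ico]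
  constructor
  · rintro ⟨j, hj⟩ i
    refine ⟨le_trans (by positivity) (hj i).1, lt_of_lt_of_le (hj i).2 ?_⟩
    rw [div_le_one hN0]
    exact_mod_cast (j i).2
  · intro hx
    have hnn : ∀ i, (0:ℝ) ≤ (N:ℝ) * x i := fun i => mul_nonneg hN0.le (hx i).1
    refine ⟨fun i => ⟨⌊(N:ℝ) * x i⌋₊, ?_⟩, fun i => ⟨?_, ?_⟩⟩
    · rw [Nat.floor_lt (hnn i)]
      calc (N:ℝ) * x i < N * 1 := mul_lt_mul_of_pos_left (hx i).2 hN0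
        _ = N := mul_one _
    · rw [div_le_iff₀ hN0]
      calc ((⌊(N:ℝ) * x i⌋₊ : ℝ)) ≤ (N:ℝ) * x i := Nat.floor_le (hnn i)
        _ = x i * N := mul_comm _ _
    · rw [lt_div_iff₀ hN0]
      calc x i * N = (N:ℝ) * x i := mul_comm _ _
        _ < ⌊(N:ℝ) * x i⌋₊ + 1 := Nat.lt_floor_add_one _

lemma disj_boxes (d N : ℕ) :
    Pairwise (Function.onFun Disjoint fun j : Fin d → Fin N =>
      Set.univ.pi fun i => Set.Ico ((j i : ℝ)/N) (((j i : ℝ)+1)/N)) := by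
  intro j j' hne
  obtain ⟨i, hi⟩ := Function.ne_iff.1 hne
  rw [Function.onFun, Set.disjoint_left]
  intro x hx hx'
  have h1 := hx i (Set.mem_univ i)
  have h2 := hx' i (Set.mem_univ i)
  simp only [Set.mem_Ico] at h1 h2
  have hN0 : (0:ℝ) < N := by
    have : 0 < N := Nat.pos_of_ne_zero (fun h => by subst h; exact (j i).elim0)
    exact_mod_cast this
  have key : ∀ a b : Fin N, (a:ℕ) < (b:ℕ) → ∀ y : ℝ,
      y < ((a:ℝ)+1)/N → (b:ℝ)/N ≤ y → False := by
    intro a b hab y hy1 hy2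
    have hle : ((a:ℝ)+1) ≤ (b:ℝ) := by exact_mod_cast hab
    have : ((a:ℝ)+1)/N ≤ (b:ℝ)/N := by gcongr
    linarith
  rcases lt_trichotomy ((j i : Fin N) : ℕ) ((j' i : Fin N) : ℕ) with h | h | h
  · exact key _ _ h _ h1.2 h2.1
  · exact hi (Fin.ext h)
  · exact key _ _ h _ h2.2 h1.1

lemma box_integral_eq (d N : ℕ) (G : (Fin d → ℝ) → ℝ) (j : Fin d → Fin N) :
    ∫ s in Set.univ.pi fun i => Set.Ico ((j i : ℝ)/N) (((j i : ℝ)+1)/N), G s =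
    ∫ u in Set.univ.pi fun _ : Fin d => Set.Ico (0:ℝ) (1/N),
      G ((fun i => (j i : ℝ)/N) + u) := by
  have h := (measurePreserving_add_left (volume : Measure (Fin d → ℝ))
      (fun i => (j i : ℝ)/N)).setIntegral_preimage_emb
      (measurableEmbedding_addLeft _) G
      (Set.univ.pi fun i => Set.Ico ((j i : ℝ)/N) (((j i : ℝ)+1)/N))
  have hset : ((fun i => (j i : ℝ)/N) + ·) ⁻¹'
      (Set.univ.pi fun i => Set.Ico ((j i : ℝ)/N) (((j i : ℝ)+1)/N)) =
      Set.univ.pi fun _ : Fin d => Set.Ico (0:ℝ) (1/N) := by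
    ext u
    simp only [Set.mem_preimage, Set.mem_pi, Set.mem_univ, forall_true_left, Set.mem_Ico,
      Pi.add_apply]
    constructor
    · intro hu i
      have h2 := (hu i).2
      rw [add_div] at h2
      exact ⟨by linarith [(hu i).1], by linarith⟩
    · intro hu i
      refine ⟨by linarith [(hu i).1], ?_⟩
      rw [add_div]
      linarith [(hu i).2]
  rw [← h, hset]

lemma vol_small_box (d N : ℕ) :
    (volume (Set.univ.pi fun _ : Fin d => Set.Ico (0:ℝ) (1/N))).toReal
      = 1/(N:ℝ)^d := by
  rw [volume_pi_pi]
  simp only [Real.volume_Ico, sub_zero, Finset.prod_const, Finset.card_univ,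
    Fintype.card_fin]
  rw [← ENNReal.ofReal_pow (by positivity), ENNReal.toReal_ofReal (by positivity),
    div_pow, one_pow]

lemma riemann_sum_tendsto {d : ℕ} (G : (Fin d → ℝ) → ℝ) (hG : Continuous G) :
    Tendsto (fun N : ℕ => (1 / (N:ℝ)^d) * ∑ j : Fin d → Fin N,
        G (fun i => (j i : ℝ) / N))
      atTop (𝓝 (∫ s in Set.univ.pi fun _ : Fin d => Set.Icc (0:ℝ) 1, G s)) := by
  rw [Metric.tendsto_atTop]
  intro ε hε
  have hKc : IsCompact (Set.univ.pi fun _ : Fin d => Set.Icc (-1:ℝ) 2) :=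
    isCompact_univ_pi fun _ => isCompact_Icc
  have hUC := hKc.uniformContinuousOn_of_continuous hG.continuousOn
  rw [Metric.uniformContinuousOn_iff] at hUC
  obtain ⟨δ, hδ, hδ'⟩ := hUC (ε/2) (by linarith)
  obtain ⟨N₀, hN₀⟩ := exists_nat_gt (1/δ)
  refine ⟨max N₀ 1, fun N hN => ?_⟩
  have hN1 : 1 ≤ N := le_trans (le_max_right _ _) hN
  have hN0 : (0:ℝ) < N := by exact_mod_cast hN1
  have hNδ : 1/(N:ℝ) < δ := by
    have h1 : 1/δ < (N:ℝ) := lt_of_lt_of_le hN₀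
      (by exact_mod_cast le_trans (le_max_left _ _) hN)
    rw [div_lt_iff₀ hδ] at h1
    rw [div_lt_iff₀ hN0]
    nlinarith
  set c : (Fin d → Fin N) → (Fin d → ℝ) := fun j i => (j i : ℝ)/N with hc
  set B : (Fin d → Fin N) → Set (Fin d → ℝ) := fun j =>
    Set.univ.pi fun i => Set.Ico ((j i : ℝ)/N) (((j i : ℝ)+1)/N) with hB
  set S : Set (Fin d → ℝ) := Set.univ.pi fun _ : Fin d => Set.Ico (0:ℝ) (1/N) with hS
  have hSfin : volume S < ⊤ := by
    rw [hS, volume_pi_pi]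
    simp only [Real.volume_Ico, sub_zero, Finset.prod_const]
    exact ENNReal.pow_lt_top ENNReal.ofReal_lt_top
  have hSvol : (volume S).toReal = 1/(N:ℝ)^d := vol_small_box d N
  have hBmeas : ∀ j, MeasurableSet (B j) := fun j =>
    MeasurableSet.univ_pi fun i => measurableSet_Ico
  have hIccC : IsCompact (Set.univ.pi fun _ : Fin d => Set.Icc (0:ℝ) 1) :=
    isCompact_univ_pi fun _ => isCompact_Icc
  have hint : IntegrableOn G (Set.univ.pi fun _ : Fin d => Set.Icc (0:ℝ) 1) :=
    hG.continuousOn.integrableOn_compact hIccC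
  have hBsub : ∀ j, B j ⊆ Set.univ.pi fun _ : Fin d => Set.Icc (0:ℝ) 1 := by
    intro j
    refine subset_trans ?_ (Set.pi_mono fun i _ => Set.Ico_subset_Icc_self)
    rw [← union_boxes d N hN1]
    exact Set.subset_iUnion _ j
  have hIeq : (∫ s in Set.univ.pi fun _ : Fin d => Set.Icc (0:ℝ) 1, G s)
      = ∑ j : Fin d → Fin N, ∫ s in B j, G s := by
    rw [setIntegral_congr_set (pi_Icc_ae_Ico d), ← union_boxes d N hN1]
    exact integral_iUnion_fintype hBmeas (disj_boxes d N)
      (fun j => hint.mono_set (hBsub j))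
  have hbox : ∀ j : Fin d → Fin N, ∫ s in B j, G s = ∫ u in S, G (c j + u) :=
    fun j => box_integral_eq d N G j
  have hint2 : ∀ j : Fin d → Fin N, IntegrableOn (fun u => G (c j + u)) S := by
    intro j
    have : IntegrableOn (fun u => G (c j + u))
        (Set.univ.pi fun _ : Fin d => Set.Icc (0:ℝ) (1/N)) :=
      ((hG.comp (continuous_const.add continuous_id)).continuousOn).integrableOn_compact
        (isCompact_univ_pi fun _ => isCompact_Icc)
    exact this.mono_set (Set.pi_mono fun i _ => Set.Ico_subset_Icc_self)
  have hconst : ∀ j : Fin d → Fin N, ∫ (_ : Fin d → ℝ) in S, G (c j) = (1/(N:ℝ)^d) * G (c j) := by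
    intro j
    rw [setIntegral_const, measureReal_def, hSvol, smul_eq_mul]
  have hsum : (1 / (N : ℝ) ^ d) * ∑ j : Fin d → Fin N, G (fun i => (j i : ℝ) / N)
      = ∑ j : Fin d → Fin N, ∫ (_ : Fin d → ℝ) in S, G (c j) := by
    rw [Finset.mul_sum]
    exact Finset.sum_congr rfl fun j _ => (hconst j).symm
  -- the difference
  have hbound : ∀ j : Fin d → Fin N,
      ‖(∫ u in S, G (c j + u)) - ∫ (_ : Fin d → ℝ) in S, G (c j)‖ ≤ (ε/2) * (1/(N:ℝ)^d) := by
    intro j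
    have hcint : IntegrableOn (fun _ : Fin d → ℝ => G (c j)) S volume :=
      integrableOn_const hSfin.ne
    rw [← integral_sub (hint2 j) hcint]
    rw [← hSvol]
    refine norm_setIntegral_le_of_norm_le_const hSfin ?_
    intro u hu
    have hu' : ∀ i, 0 ≤ u i ∧ u i < 1/(N:ℝ) := by
      intro i
      have := hu i (Set.mem_univ i)
      simpa using this
    have hcj : ∀ i, 0 ≤ c j i ∧ c j i < 1 := by
      intro i
      constructor
      · positivity
      · rw [hc, div_lt_one hN0]
        exact_mod_cast (j i).2
    have hxK : (c j + u) ∈ Set.univ.pi fun _ : Fin d => Set.Icc (-1:ℝ) 2 := by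
      intro i _
      have h1 := (hcj i); have h2 := hu' i
      have hNle : 1/(N:ℝ) ≤ 1 := by
        rw [div_le_one hN0]; exact_mod_cast hN1
      constructor <;> simp only [Pi.add_apply] <;> nlinarith [h1.1, h1.2, h2.1, h2.2]
    have hyK : c j ∈ Set.univ.pi fun _ : Fin d => Set.Icc (-1:ℝ) 2 := by
      intro i _
      have h1 := hcj i
      exact ⟨by linarith [h1.1], by linarith [h1.2]⟩
    have hdist : dist (c j + u) (c j) < δ := by
      rw [dist_pi_lt_iff hδ]
      intro i
      rw [Real.dist_eq, Pi.add_apply, add_sub_cancel_left, abs_of_nonneg (hu' i).1]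
      exact lt_trans (hu' i).2 hNδ
    have := hδ' _ hxK _ hyK hdist
    rw [Real.dist_eq] at this
    exact le_of_lt this
  have hcard : (Fintype.card (Fin d → Fin N) : ℝ) = (N:ℝ)^d := by
    simp [Fintype.card_fun]
  rw [Real.dist_eq]
  have key : |(1 / (N : ℝ) ^ d) * (∑ j : Fin d → Fin N, G (fun i => (j i : ℝ) / N))
      - ∫ s in Set.univ.pi fun _ : Fin d => Set.Icc (0:ℝ) 1, G s| ≤ ε/2 := by
    rw [hIeq, hsum]
    rw [← Finset.sum_sub_distrib]
    calc |∑ j : Fin d → Fin N, ((∫ (_ : Fin d → ℝ) in S, G (c j)) - ∫ s in B j, G s)|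
        ≤ ∑ j : Fin d → Fin N, |(∫ (_ : Fin d → ℝ) in S, G (c j)) - ∫ s in B j, G s| :=
          Finset.abs_sum_le_sum_abs _ _
      _ ≤ ∑ j : Fin d → Fin N, (ε/2) * (1/(N:ℝ)^d) := by
          refine Finset.sum_le_sum fun j _ => ?_
          rw [hbox j, abs_sub_comm]
          exact hbound j
      _ = (N:ℝ)^d * ((ε/2) * (1/(N:ℝ)^d)) := by
          rw [Finset.sum_const, Finset.card_univ, nsmul_eq_mul, hcard]
      _ = ε/2 := by field_simp
  linarith [key]

/-- The ring `R = ℤ[u₁^{±1},…,u_d^{±1}]`, realized as the group algebra of `ℤ^d` over `ℤ`. -/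
abbrev LaurentR (d : ℕ) : Type := AddMonoidAlgebra ℤ (Fin d → ℤ)

/-- Evaluation of a Laurent polynomial `f ∈ R` at a point `z ∈ (ℂ∖{0})^d`:
the ring homomorphism sending `uᵢ` to `zᵢ`. -/
def ev {d : ℕ} (z : Fin d → ℂ) (f : LaurentR d) : ℂ :=
  Finsupp.sum f.coeff fun m c => (c : ℂ) * ∏ i, z i ^ (m i)

lemma ev_continuous {d : ℕ} (f : LaurentR d) :
    Continuous (fun s : Fin d → ℝ =>
      ev (fun i => Complex.exp (2 * Real.pi * Complex.I * (s i : ℂ))) f) := by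
  unfold ev Finsupp.sum
  refine continuous_finset_sum _ fun m _ => ?_
  refine continuous_const.mul (continuous_finset_prod _ fun i _ => ?_)
  have : (fun s : Fin d → ℝ =>
      Complex.exp (2 * Real.pi * Complex.I * (s i : ℂ)) ^ (m i)) =
      fun s : Fin d → ℝ =>
      Complex.exp ((m i : ℂ) * (2 * Real.pi * Complex.I * (s i : ℂ))) := by
    funext s
    rw [Complex.exp_int_mul]
  rw [this]
  exact Complex.continuous_exp.comp (continuous_const.mul
    (continuous_const.mul (Complex.continuous_ofReal.comp (continuous_apply i))))

lemma ev_ne_zero {d : ℕ} (f : LaurentR d)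
    (hnovanish : ∀ z : Fin d → ℂ, (∀ i, ‖z i‖ = 1) → ev z f ≠ 0)
    (s : Fin d → ℝ) :
    ev (fun i => Complex.exp (2 * Real.pi * Complex.I * (s i : ℂ))) f ≠ 0 := by
  refine hnovanish _ fun i => ?_
  rw [Complex.norm_exp]
  have : (2 * (Real.pi : ℂ) * Complex.I * (s i : ℂ)).re = 0 := by
    simp [Complex.mul_re, Complex.mul_im]
  rw [this, Real.exp_zero]

lemma G_continuous {d : ℕ} (f : LaurentR d)
    (hnovanish : ∀ z : Fin d → ℂ, (∀ i, ‖z i‖ = 1) → ev z f ≠ 0) :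
    Continuous (fun s : Fin d → ℝ => Real.log ‖
      (ev (fun i => Complex.exp (2 * Real.pi * Complex.I * (s i : ℂ))) f)‖) := by
  rw [continuous_iff_continuousAt]
  intro s
  have h1 : ‖
      (ev (fun i => Complex.exp (2 * Real.pi * Complex.I * (s i : ℂ))) f)‖ ≠ 0 :=
    norm_ne_zero_iff.2 (ev_ne_zero f hnovanish s)
  have h2 : ContinuousAt (fun x : ℂ => Real.log ‖x‖)
      (ev (fun i => Complex.exp (2 * Real.pi * Complex.I * (s i : ℂ))) f) :=
    ContinuousAt.comp (Real.continuousAt_log h1) continuous_norm.continuousAt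
  show ContinuousAt ((fun x : ℂ => Real.log ‖x‖) ∘
    (fun s : Fin d → ℝ =>
      ev (fun i => Complex.exp (2 * Real.pi * Complex.I * (s i : ℂ))) f)) s
  exact ContinuousAt.comp h2 (ev_continuous f).continuousAt


/-- The logarithmic Mahler measure
`m(f) = ∫_{[0,1]^d} log |f(e^{2πis₁},…,e^{2πis_d})| ds`. -/
def mahlerMeasure {d : ℕ} (f : LaurentR d) : ℝ :=
  ∫ s in (Set.univ.pi fun _ : Fin d => Set.Icc (0 : ℝ) 1),
    Real.log ‖
      (ev (fun i => Complex.exp (2 * Real.pi * Complex.I * (s i : ℂ))) f)‖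

set_option maxHeartbeats 1000000 in
theorem roots_of_unity_averages_tendsto_mahler_measure (d : ℕ)
    (f : LaurentR d) (hf : f ≠ 0)
    (hnovanish : ∀ z : Fin d → ℂ, (∀ i, ‖z i‖ = 1) → ev z f ≠ 0) :
    Filter.Tendsto
      (fun N : ℕ => (1 / (N : ℝ) ^ d) *
        ∑ j : Fin d → Fin N,
          Real.log ‖ev (fun i =>
            Complex.exp (2 * Real.pi * Complex.I * ((j i : ℕ) : ℂ) / (N : ℂ))) f‖)
      Filter.atTop (nhds (mahlerMeasure f)) := by
  unfold mahlerMeasure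
  have h := riemann_sum_tendsto
    (fun s : Fin d → ℝ => Real.log ‖
      (ev (fun i => Complex.exp (2 * Real.pi * Complex.I * (s i : ℂ))) f)‖)
    (G_continuous f hnovanish)
  refine h.congr fun N => ?_
  congr 1
  refine Finset.sum_congr rfl fun j _ => ?_
  have hz : (fun i => Complex.exp (2 * Real.pi * Complex.I * ((j i : ℕ) : ℂ) / (N : ℂ)))
      = fun i => Complex.exp (2 * Real.pi * Complex.I *
          (((((j i : ℕ) : ℝ)) / (N : ℝ) : ℝ) : ℂ)) := by
    funext i
    have hN : N ≠ 0 := fun h0 => by subst h0; exact (j i).elim0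
    have hNC : (N : ℂ) ≠ 0 := Nat.cast_ne_zero.2 hN
    rw [Complex.ofReal_div]
    push_cast
    ring
  rw [hz]
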